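/- Let A ⊆ B be an extension of commutative rings and let X₁, …, Xₙ be finitely many indeterminates over B. Then the subring A + (X₁,…,Xₙ)B[X₁,…,Xₙ] = {h ∈ B[X₁,…,Xₙ] : h(0,…,0) ∈ A} of the polynomial ring B[X₁,…,Xₙ] is a Noetherian ring if and only if A is a Noetherian ring and B is finitely generated as an A-module. -/

import Mathlib

open MvPolynomial

/-- Auxiliary: if `u + v = Finsupp.single i 1` then `u = 0` or `v = 0`. -/
lemma aux_add_eq_single {n : ℕ} {i : Fin n} {u v : Fin n →₀ ℕ}
    (h : u + v = Finsupp.single i 1) : u = 0 ∨ v = 0 := by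
  have h' : ∀ j, u j + v j = if i = j then 1 else 0 := fun j => by
    have := DFunLike.congr_fun h j
    simpa [Finsupp.single_apply] using this
  rcases Nat.eq_zero_or_pos (u i) with hu | hu
  · left; ext j
    simp only [Finsupp.coe_zero, Pi.zero_apply]
    rcases eq_or_ne i j with rfl | hj
    · exact hu
    · have := h' j
      simp only [if_neg hj] at this
      omega
  · right; ext j
    simp only [Finsupp.coe_zero, Pi.zero_apply]
    rcases eq_or_ne i j with rfl | hj
    · have := h' i
      simp at this
      omega
    · have := h' j
      simp only [if_neg hj] at this
      omega

/-- Auxiliary: first-order coefficient of a product where the second factor has zero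
constant coefficient. -/
lemma aux_coeff_mul {B : Type*} [CommRing B] {n : ℕ} (i : Fin n)
    (p q : MvPolynomial (Fin n) B) (hq : constantCoeff q = 0) :
    coeff (Finsupp.single i 1) (p * q) =
      constantCoeff p * coeff (Finsupp.single i 1) q := by
  rw [coeff_mul]
  rw [Finset.sum_eq_single_of_mem (0, Finsupp.single i 1)
    (by rw [Finset.HasAntidiagonal.mem_antidiagonal]; simp)]
  · simp [constantCoeff_eq]
  · rintro ⟨u, v⟩ huv hne
    rw [Finset.HasAntidiagonal.mem_antidiagonal] at huv
    rcases aux_add_eq_single huv with rfl | rfl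
    · exact absurd (by simpa using huv) (by simpa using hne)
    · have : coeff (0 : Fin n →₀ ℕ) q = 0 := hq
      simp [this]

theorem statement11 {B : Type*} [CommRing B] (A : Subring B) (n : ℕ) (hn : 0 < n) :
    IsNoetherianRing
        ↥(A.comap (MvPolynomial.constantCoeff : MvPolynomial (Fin n) B →+* B)) ↔
      IsNoetherianRing A ∧ Module.Finite A B := by
  set K : MvPolynomial (Fin n) B →+* B := MvPolynomial.constantCoeff with hK
  set R : Subring (MvPolynomial (Fin n) B) := A.comap K with hRdef
  constructor
  · intro hR
    classical
    haveI := hR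
    -- the constant coefficient map, restricted to `R`, lands in `A`
    have hmemA : ∀ x : ↥R, K (x : MvPolynomial (Fin n) B) ∈ A := fun x => x.2
    let π : ↥R →+* ↥A := RingHom.codRestrict (K.comp R.subtype) A hmemA
    have hπ : Function.Surjective π := by
      rintro ⟨a, ha⟩
      refine ⟨⟨MvPolynomial.C a, ?_⟩, ?_⟩
      · simpa [hRdef, Subring.mem_comap, hK] using ha
      · ext
        simp [π, hK]
    have hA : IsNoetherianRing ↥A := isNoetherianRing_of_surjective _ _ π hπ
    refine ⟨hA, ?_⟩
    -- now show `B` is a finite `A`-module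
    let i0 : Fin n := ⟨0, hn⟩
    let I : Ideal ↥R := RingHom.ker (K.comp R.subtype)
    obtain ⟨s, hs⟩ : I.FG := IsNoetherian.noetherian I
    refine ⟨⟨s.image (fun f : ↥R => coeff (Finsupp.single i0 1) (f : MvPolynomial (Fin n) B)),
      ?_⟩⟩
    rw [eq_top_iff]
    rintro b -
    -- `X i0 * C b` lies in the ideal `I`
    have hmemR : X i0 * MvPolynomial.C b ∈ R := by
      rw [hRdef, Subring.mem_comap]
      simp [hK]
    have hmemI : (⟨X i0 * MvPolynomial.C b, hmemR⟩ : ↥R) ∈ I := by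
      simp [I, RingHom.mem_ker, hK]
    rw [← hs] at hmemI
    rw [Ideal.span, Submodule.mem_span_finset] at hmemI
    obtain ⟨c, -, hc⟩ := hmemI
    -- push the equation down to `MvPolynomial (Fin n) B` and take coefficients
    have hc' : ∑ f ∈ s, (c f : MvPolynomial (Fin n) B) * (f : MvPolynomial (Fin n) B) =
        X i0 * MvPolynomial.C b := by
      have := congrArg (fun x : ↥R => (x : MvPolynomial (Fin n) B)) hc
      simpa using this
    have hb : b = ∑ f ∈ s, constantCoeff (c f : MvPolynomial (Fin n) B) *
        coeff (Finsupp.single i0 1) (f : MvPolynomial (Fin n) B) := by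
      have h1 : coeff (Finsupp.single i0 1) (X i0 * MvPolynomial.C b) = b := by
        simpa using MvPolynomial.coeff_X_mul 0 i0 (MvPolynomial.C b)
      calc b = coeff (Finsupp.single i0 1)
            (∑ f ∈ s, (c f : MvPolynomial (Fin n) B) * (f : MvPolynomial (Fin n) B)) := by
              rw [hc', h1]
        _ = ∑ f ∈ s, coeff (Finsupp.single i0 1)
            ((c f : MvPolynomial (Fin n) B) * (f : MvPolynomial (Fin n) B)) := by
              rw [coeff_sum]
        _ = _ := by
              refine Finset.sum_congr rfl fun f hf => aux_coeff_mul i0 _ _ ?_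
              have hfI : f ∈ I := hs ▸ Ideal.subset_span (by exact_mod_cast hf)
              simpa [I, RingHom.mem_ker, hK] using hfI
    rw [hb]
    refine Submodule.sum_mem _ fun f hf => ?_
    have haf : constantCoeff (c f : MvPolynomial (Fin n) B) ∈ A := (c f).2
    have : constantCoeff (c f : MvPolynomial (Fin n) B) *
        coeff (Finsupp.single i0 1) (f : MvPolynomial (Fin n) B) =
        (⟨_, haf⟩ : ↥A) • coeff (Finsupp.single i0 1) (f : MvPolynomial (Fin n) B) := rfl
    rw [this]
    refine Submodule.smul_mem _ _ (Submodule.subset_span ?_)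
    rw [Finset.coe_image]
    exact Set.mem_image_of_mem _ hf
  · rintro ⟨hA, hB⟩
    classical
    haveI := hA
    haveI := hB
    -- the map `A[X] → B[X]`
    let φ : MvPolynomial (Fin n) ↥A →+* MvPolynomial (Fin n) B :=
      MvPolynomial.map (SubringClass.subtype A)
    have hφ : ∀ p, φ p ∈ R := fun p => by
      simp [hRdef, Subring.mem_comap, hK, φ, MvPolynomial.constantCoeff_map]
    letI : Algebra (MvPolynomial (Fin n) ↥A) (MvPolynomial (Fin n) B) := φ.toAlgebra
    -- `B[X]` is a finite `A[X]`-module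
    obtain ⟨t, ht⟩ := hB.1
    haveI hfin : Module.Finite (MvPolynomial (Fin n) ↥A) (MvPolynomial (Fin n) B) := by
      refine ⟨⟨t.image MvPolynomial.C, ?_⟩⟩
      rw [eq_top_iff]
      rintro p -
      set M := Submodule.span (MvPolynomial (Fin n) ↥A)
        ((t.image (MvPolynomial.C (σ := Fin n))) : Set (MvPolynomial (Fin n) B)) with hM
      show p ∈ M
      induction p using MvPolynomial.induction_on' with
      | add p q hp hq => exact Submodule.add_mem _ hp hq
      | monomial u b =>
        have hb : b ∈ Submodule.span ↥A (t : Set B) := ht ▸ Submodule.mem_top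
        induction hb using Submodule.span_induction with
        | mem x hx =>
          have : (monomial u) x =
              ((monomial u (1 : ↥A) : MvPolynomial (Fin n) ↥A)) • MvPolynomial.C x := by
            rw [Algebra.smul_def, RingHom.algebraMap_toAlgebra]
            simp only [φ, MvPolynomial.map_monomial, map_one]
            rw [mul_comm, MvPolynomial.C_mul_monomial, mul_one]
          rw [this]
          exact Submodule.smul_mem _ _ (Submodule.subset_span (by
            rw [Finset.coe_image]; exact Set.mem_image_of_mem _ hx))
        | zero => simp
        | add x y _ _ hx hy => rw [map_add]; exact Submodule.add_mem _ hx hy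
        | smul a x _ hx =>
          have h2 : ((MvPolynomial.C a : MvPolynomial (Fin n) ↥A)) • (monomial u) x
              = (monomial u) (a • x) := by
            rw [Algebra.smul_def, RingHom.algebraMap_toAlgebra]
            show φ (MvPolynomial.C a) * (monomial u) x = _
            rw [show φ (MvPolynomial.C a) = MvPolynomial.C ((a : B)) from MvPolynomial.map_C _ _]
            rw [MvPolynomial.C_mul_monomial]
            congr 1
          rw [← h2]
          exact Submodule.smul_mem _ _ hx
    haveI : IsNoetherian (MvPolynomial (Fin n) ↥A) (MvPolynomial (Fin n) B) :=
      isNoetherian_of_isNoetherianRing_of_finite _ _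
    letI : Algebra (MvPolynomial (Fin n) ↥A) ↥R := (RingHom.codRestrict φ R hφ).toAlgebra
    -- the inclusion `R → B[X]` is `A[X]`-linear and injective
    let j : ↥R →ₗ[MvPolynomial (Fin n) ↥A] MvPolynomial (Fin n) B :=
      { toFun := fun x => (x : MvPolynomial (Fin n) B)
        map_add' := fun x y => rfl
        map_smul' := fun c x => rfl }
    haveI : IsNoetherian (MvPolynomial (Fin n) ↥A) ↥R :=
      isNoetherian_of_injective j Subtype.val_injective
    haveI : Module.Finite (MvPolynomial (Fin n) ↥A) ↥R :=
      ⟨IsNoetherian.noetherian ⊤⟩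
    haveI : Algebra.FiniteType (MvPolynomial (Fin n) ↥A) ↥R :=
      Module.Finite.finiteType _
    exact Algebra.FiniteType.isNoetherianRing (MvPolynomial (Fin n) ↥A) ↥R
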